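/- Let K ⊆ L be a field extension and X an indeterminate over L. Then R = K + XL[X] is condensed if and only if the extension K ⊆ L is vs-closed, i.e., for every pair of K-subspaces V, W of L, the K-subspace generated by {vw : v ∈ V, w ∈ W} equals {vw : v ∈ V, w ∈ W}. -/

import Mathlib

/-- An integral domain is condensed if for every pair of nonzero ideals `I, J`,
the product `I*J` equals the set of products `{i*j : i ∈ I, j ∈ J}`. -/
def IsCondensed (D : Type*) [CommRing D] : Prop :=
  ∀ I J : Ideal D, I ≠ ⊥ → J ≠ ⊥ → ∀ x ∈ I * J, ∃ i ∈ I, ∃ j ∈ J, x = i * j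

/-- The ring `A + X·B[X]`: polynomials over `B` whose constant coefficient lies
in the subring `A`. -/
def constSubring {B : Type*} [CommRing B] (A : Subring B) : Subring (Polynomial B) where
  carrier := {f | f.coeff 0 ∈ A}
  zero_mem' := by simpa using zero_mem A
  one_mem' := by simpa using one_mem A
  add_mem' := by
    intro f g hf hg
    simpa using add_mem hf hg
  neg_mem' := by
    intro f hf
    simpa using A.neg_mem hf
  mul_mem' := by
    intro f g hf hg
    simpa [Polynomial.mul_coeff_zero] using mul_mem hf hg

/-- The field extension `K ⊆ L` is vs-closed if for every pair of `K`-subspaces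
`V, W` of `L`, the `K`-span of `P(V,W) = {vw : v ∈ V, w ∈ W}` equals `P(V,W)`. -/
def VSClosed (K L : Type*) [Field K] [Field L] [Algebra K L] : Prop :=
  ∀ V W : Submodule K L,
    (Submodule.span K {x : L | ∃ v ∈ V, ∃ w ∈ W, x = v * w} : Set L) =
      {x : L | ∃ v ∈ V, ∃ w ∈ W, x = v * w}

open Polynomial

lemma exists_struct {K L : Type*} [Field K] [Field L] [Algebra K L]
    (I : Ideal ↥(constSubring (algebraMap K L).range)) :
    ∃ (f : L[X]) (V : Submodule K L), V ≠ ⊥ ∧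
      ∀ p : L[X], (∃ a ∈ I, (a : L[X]) = p) ↔
        ∃ v ∈ V, ∃ s, p = f * (C v + X * s) := by
  classical
  have memIm_mul : ∀ (r p : L[X]), r.coeff 0 ∈ (algebraMap K L).range → (∃ a ∈ I, (a : L[X]) = p) →
      (∃ a ∈ I, (a : L[X]) = r * p) := by
    rintro r p hr ⟨a, ha, rfl⟩
    exact ⟨(⟨r, hr⟩ : ↥(constSubring (algebraMap K L).range)) * a, I.mul_mem_left _ ha, rfl⟩
  have memIm_add : ∀ (p q : L[X]), (∃ a ∈ I, (a : L[X]) = p) → (∃ a ∈ I, (a : L[X]) = q) →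
      (∃ a ∈ I, (a : L[X]) = p + q) := by
    rintro p q ⟨a, ha, rfl⟩ ⟨b, hb, rfl⟩
    exact ⟨a + b, I.add_mem ha hb, rfl⟩
  have memIm_sub : ∀ (p q : L[X]), (∃ a ∈ I, (a : L[X]) = p) → (∃ a ∈ I, (a : L[X]) = q) →
      (∃ a ∈ I, (a : L[X]) = p - q) := by
    rintro p q ⟨a, ha, rfl⟩ ⟨b, hb, rfl⟩
    exact ⟨a - b, I.sub_mem ha hb, rfl⟩
  obtain ⟨f, hfspan⟩ :=
    (IsPrincipalIdealRing.principal (Ideal.span {p : L[X] | ∃ a ∈ I, (a : L[X]) = p})).principal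
  -- f divides everything in the image
  have hdvd : ∀ p : L[X], (∃ a ∈ I, (a : L[X]) = p) → f ∣ p := by
    intro p hp
    have : p ∈ Ideal.span {p : L[X] | ∃ a ∈ I, (a : L[X]) = p} := Ideal.subset_span hp
    rw [hfspan] at this
    exact Ideal.mem_span_singleton.mp this
  -- f * X * s is always in the image
  have hfX : ∀ s : L[X], (∃ a ∈ I, (a : L[X]) = X * s * f) := by
    have key : ∀ q ∈ Ideal.span {p : L[X] | ∃ a ∈ I, (a : L[X]) = p},
        ∀ s : L[X], ∃ a ∈ I, (a : L[X]) = X * s * q := by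
      intro q hq
      induction hq using Submodule.span_induction with
      | mem p hp => exact fun s => memIm_mul _ _ (by simp) hp
      | zero => exact fun s => ⟨0, I.zero_mem, by simp⟩
      | add x y hx hy ihx ihy =>
          intro s
          have := memIm_add _ _ (ihx s) (ihy s)
          rwa [← mul_add] at this
      | smul c x hx ih =>
          intro s
          have := ih (s * c)
          obtain ⟨a, ha, hae⟩ := this
          exact ⟨a, ha, by rw [hae]; simp [smul_eq_mul]; ring⟩
    exact fun s => key f (by rw [hfspan]; exact Ideal.mem_span_singleton_self f) s
  -- the subspace of constant terms
  set V0 : Submodule K L :=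
    { carrier := {v : L | ∃ a ∈ I, (a : L[X]) = f * C v}
      zero_mem' := ⟨0, I.zero_mem, by simp⟩
      add_mem' := by
        rintro v w hv hw
        have := memIm_add _ _ hv hw
        rwa [← mul_add, ← C_add] at this
      smul_mem' := by
        rintro k v hv
        have := memIm_mul (C (algebraMap K L k)) _ (by simp) hv
        refine Exists.imp (fun a => And.imp_right (fun h => ?_)) this
        rw [h, Algebra.smul_def, C_mul]; ring } with hV0
  have hchar : ∀ p : L[X], (∃ a ∈ I, (a : L[X]) = p) ↔
      ∃ v ∈ V0, ∃ s, p = f * (C v + X * s) := by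
    intro p
    constructor
    · intro hp
      obtain ⟨q, rfl⟩ := hdvd p hp
      refine ⟨q.coeff 0, ?_, q.divX, by linear_combination (-f) * X_mul_divX_add q⟩
      have h2 : ∃ a ∈ I, (a : L[X]) = X * q.divX * f := hfX q.divX
      have := memIm_sub _ _ hp h2
      refine Exists.imp (fun a => And.imp_right (fun h => ?_)) this
      rw [h]
      linear_combination (-f) * X_mul_divX_add q
    · rintro ⟨v, hv, s, rfl⟩
      obtain ⟨a, ha, hae⟩ := hv
      have h2 := hfX s
      have := memIm_add _ _ ⟨a, ha, hae⟩ h2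
      refine Exists.imp (fun a => And.imp_right (fun h => ?_)) this
      rw [h]; ring
  by_cases hV : V0 = ⊥
  · refine ⟨f * X, ⊤, ?_, ?_⟩
    · intro h
      have : (1 : L) ∈ (⊥ : Submodule K L) := h ▸ Submodule.mem_top
      simpa using this
    · intro p
      constructor
      · intro hp
        obtain ⟨v, hv, s, rfl⟩ := (hchar p).mp hp
        rw [hV] at hv
        simp only [Submodule.mem_bot] at hv
        subst hv
        refine ⟨s.coeff 0, Submodule.mem_top, s.divX, ?_⟩
        rw [C_0, zero_add]
        linear_combination (-(f * X)) * X_mul_divX_add s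
      · rintro ⟨v, _, s, rfl⟩
        obtain ⟨a, ha, hae⟩ := hfX (C v + X * s)
        exact ⟨a, ha, by rw [hae]; ring⟩
  · exact ⟨f, V0, hV, hchar⟩

/-- The ideal `XV + X²L[X]` of `K + XL[X]`. -/
def idealOf {K L : Type*} [Field K] [Field L] [Algebra K L] (V : Submodule K L) :
    Ideal ↥(constSubring (algebraMap K L).range) where
  carrier := {a | ∃ v ∈ V, ∃ s, (a : L[X]) = X * (C v + X * s)}
  zero_mem' := ⟨0, V.zero_mem, 0, by simp⟩
  add_mem' := by
    rintro a b ⟨v, hv, s, ha⟩ ⟨w, hw, t, hb⟩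
    refine ⟨v + w, V.add_mem hv hw, s + t, ?_⟩
    push_cast [ha, hb]
    rw [C_add]; ring
  smul_mem' := by
    rintro c a ⟨v, hv, s, ha⟩
    obtain ⟨k, hk⟩ := c.2
    refine ⟨k • v, V.smul_mem k hv, C ((c : L[X]).coeff 0) * s
      + (c : L[X]).divX * (C v + X * s), ?_⟩
    have hc : (c : L[X]) = C ((c : L[X]).coeff 0) + X * (c : L[X]).divX := by
      rw [add_comm, X_mul_divX_add]
    have hsm : C (k • v) = C ((c : L[X]).coeff 0) * C v := by
      rw [Algebra.smul_def, hk, ← C_mul]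
    show ((c * a : ↥(constSubring (algebraMap K L).range)) : L[X]) = _
    push_cast [ha]
    rw [hsm]
    nth_rewrite 1 [hc]
    ring


theorem stmt17 (K L : Type*) [Field K] [Field L] [Algebra K L] :
    IsCondensed (constSubring (algebraMap K L).range) ↔ VSClosed K L := by
  constructor
  · -- condensed → vs-closed
    intro hc V W
    refine Set.Subset.antisymm ?_ Submodule.subset_span
    intro u hu
    rw [SetLike.mem_coe] at hu
    have hne : ∀ V' : Submodule K L, idealOf (K := K) V' ≠ ⊥ := by
      intro V'
      rw [Submodule.ne_bot_iff]
      refine ⟨⟨X * (C 0 + X * 1), ?_⟩, ⟨0, V'.zero_mem, 1, rfl⟩, ?_⟩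
      · exact ⟨0, by simp⟩
      · intro h
        have : (X * (C 0 + X * 1) : L[X]) = 0 := congrArg Subtype.val h
        simp at this
    -- the element C u * X ^ 2 of R
    have hmem : ∀ u : L, (C u * X ^ 2 : L[X]).coeff 0 ∈ (algebraMap K L).range := by
      intro u; exact ⟨0, by simp⟩
    have key : ∀ u ∈ Submodule.span K {x : L | ∃ v ∈ V, ∃ w ∈ W, x = v * w},
        (⟨C u * X ^ 2, hmem u⟩ : ↥(constSubring (algebraMap K L).range)) ∈
          idealOf (K := K) V * idealOf (K := K) W := by
      intro u hu
      induction hu using Submodule.span_induction with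
      | mem x hx =>
          obtain ⟨v, hv, w, hw, rfl⟩ := hx
          have h1 : (⟨X * (C v + X * 0), ⟨0, by simp⟩⟩ :
              ↥(constSubring (algebraMap K L).range)) ∈ idealOf (K := K) V :=
            ⟨v, hv, 0, rfl⟩
          have h2 : (⟨X * (C w + X * 0), ⟨0, by simp⟩⟩ :
              ↥(constSubring (algebraMap K L).range)) ∈ idealOf (K := K) W :=
            ⟨w, hw, 0, rfl⟩
          have := Ideal.mul_mem_mul h1 h2
          convert this using 1
          apply Subtype.ext
          push_cast
          rw [C_mul]; ring
      | zero =>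
          convert Ideal.zero_mem _ using 1
          apply Subtype.ext
          push_cast
          simp
      | add x y hx hy ihx ihy =>
          have := Ideal.add_mem _ ihx ihy
          convert this using 1
          apply Subtype.ext
          push_cast
          rw [C_add]; ring
      | smul k x hx ih =>
          have hk : ((C (algebraMap K L k) : L[X])).coeff 0 ∈ (algebraMap K L).range :=
            ⟨k, by simp⟩
          have := Ideal.mul_mem_left _ ⟨C (algebraMap K L k), hk⟩ ih
          convert this using 1
          apply Subtype.ext
          push_cast
          rw [Algebra.smul_def, C_mul]; ring
    obtain ⟨i, hi, j, hj, hij⟩ := hc _ _ (hne V) (hne W) _ (key u hu)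
    obtain ⟨v, hv, s, hieq⟩ := hi
    obtain ⟨w, hw, t, hjeq⟩ := hj
    refine ⟨v, hv, w, hw, ?_⟩
    have hcoe : (C u * X ^ 2 : L[X]) = (X * (C v + X * s)) * (X * (C w + X * t)) := by
      have := congrArg Subtype.val hij
      push_cast at this
      rw [hieq, hjeq] at this
      exact this
    have hX2 : (X ^ 2 : L[X]) ≠ 0 := pow_ne_zero 2 X_ne_zero
    have hcancel : (C u : L[X]) = (C v + X * s) * (C w + X * t) := by
      apply mul_right_cancel₀ hX2
      rw [hcoe]; ring
    have := congrArg (fun p : L[X] => p.coeff 0) hcancel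
    simpa [mul_coeff_zero] using this
  · -- vs-closed → condensed
    intro hvs I J hI hJ x hx
    obtain ⟨f, V, hVne, charI⟩ := exists_struct I
    obtain ⟨g, W, hWne, charJ⟩ := exists_struct J
    have hrep : ∃ u ∈ Submodule.span K {x : L | ∃ v ∈ V, ∃ w ∈ W, x = v * w},
        ∃ h : L[X], (x : L[X]) = f * g * (C u + X * h) := by
      refine Submodule.mul_induction_on hx ?_ ?_
      · intro m hm n hn
        obtain ⟨v, hv, s, hmeq⟩ := (charI _).mp ⟨m, hm, rfl⟩
        obtain ⟨w, hw, t, hneq⟩ := (charJ _).mp ⟨n, hn, rfl⟩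
        refine ⟨v * w, Submodule.subset_span ⟨v, hv, w, hw, rfl⟩,
          C v * t + C w * s + X * (s * t), ?_⟩
        push_cast
        rw [hmeq, hneq, C_mul]; ring
      · rintro a b ⟨u, hu, h, ha⟩ ⟨u', hu', h', hb⟩
        refine ⟨u + u', Submodule.add_mem _ hu hu', h + h', ?_⟩
        push_cast [ha, hb]
        rw [C_add]; ring
    obtain ⟨u, hu, h, hxeq⟩ := hrep
    have hu' : u ∈ {x : L | ∃ v ∈ V, ∃ w ∈ W, x = v * w} := by
      rw [← hvs V W]; exact hu
    obtain ⟨v, hv, w, hw, huvw⟩ := hu'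
    by_cases hv0 : v = 0
    · have hu0 : u = 0 := by rw [huvw, hv0, zero_mul]
      obtain ⟨v₀, hv₀V, hv₀⟩ := (Submodule.ne_bot_iff V).mp hVne
      obtain ⟨i, hiI, hieq⟩ := (charI _).mpr ⟨v₀, hv₀V, 0, rfl⟩
      obtain ⟨j, hjJ, hjeq⟩ := (charJ _).mpr ⟨0, W.zero_mem, C v₀⁻¹ * h, rfl⟩
      refine ⟨i, hiI, j, hjJ, ?_⟩
      apply Subtype.ext
      push_cast
      rw [hxeq, hieq, hjeq, hu0]
      have hc : (C v₀ * C v₀⁻¹ : L[X]) = 1 := by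
        rw [← C_mul, mul_inv_cancel₀ hv₀, C_1]
      rw [C_0]
      linear_combination (-(f * g * X * h)) * hc
    · obtain ⟨i, hiI, hieq⟩ := (charI _).mpr ⟨v, hv, 0, rfl⟩
      obtain ⟨j, hjJ, hjeq⟩ := (charJ _).mpr ⟨w, hw, C v⁻¹ * h, rfl⟩
      refine ⟨i, hiI, j, hjJ, ?_⟩
      apply Subtype.ext
      push_cast
      rw [hxeq, hieq, hjeq, huvw, C_mul]
      have hc : (C v * C v⁻¹ : L[X]) = 1 := by
        rw [← C_mul, mul_inv_cancel₀ hv0, C_1]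
      linear_combination (-(f * g * X * h)) * hc
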